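/- Let K be a field of characteristic 0 and A = O_q(M_2(K)) with relations as above, where q is a root of unity of degree l ≥ 3. Then x^l and y^l are central elements, and for all i, j ≥ 0 with i + j = l the element u^i·v^j is central. -/

import Mathlib

/-- The defining relations of the coordinate algebra `O_q(M_2(K))` of quantum 2×2 matrices,
generated by `x, y, u, v` with `xu = qux`, `yu = q⁻¹uy`, `vu = uv`, `xv = qvx`, `vy = qyv`,
`yx = xy - (q - q⁻¹)uv`. -/
inductive QMatRel (K : Type*) [Field K] (q : K) :
    FreeAlgebra K (Fin 4) → FreeAlgebra K (Fin 4) → Prop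
  | relxu : QMatRel K q (FreeAlgebra.ι K 0 * FreeAlgebra.ι K 2)
      (algebraMap K (FreeAlgebra K (Fin 4)) q * (FreeAlgebra.ι K 2 * FreeAlgebra.ι K 0))
  | relyu : QMatRel K q (FreeAlgebra.ι K 1 * FreeAlgebra.ι K 2)
      (algebraMap K (FreeAlgebra K (Fin 4)) q⁻¹ * (FreeAlgebra.ι K 2 * FreeAlgebra.ι K 1))
  | relvu : QMatRel K q (FreeAlgebra.ι K 3 * FreeAlgebra.ι K 2)
      (FreeAlgebra.ι K 2 * FreeAlgebra.ι K 3)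
  | relxv : QMatRel K q (FreeAlgebra.ι K 0 * FreeAlgebra.ι K 3)
      (algebraMap K (FreeAlgebra K (Fin 4)) q * (FreeAlgebra.ι K 3 * FreeAlgebra.ι K 0))
  | relvy : QMatRel K q (FreeAlgebra.ι K 3 * FreeAlgebra.ι K 1)
      (algebraMap K (FreeAlgebra K (Fin 4)) q * (FreeAlgebra.ι K 1 * FreeAlgebra.ι K 3))
  | relyx : QMatRel K q (FreeAlgebra.ι K 1 * FreeAlgebra.ι K 0)
      (FreeAlgebra.ι K 0 * FreeAlgebra.ι K 1 -
        algebraMap K (FreeAlgebra K (Fin 4)) (q - q⁻¹) * (FreeAlgebra.ι K 2 * FreeAlgebra.ι K 3))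

/-- The coordinate algebra of quantum 2×2 matrices. -/
abbrev QMat (K : Type*) [Field K] (q : K) := RingQuot (QMatRel K q)

noncomputable def QMat.x (K : Type*) [Field K] (q : K) : QMat K q :=
  RingQuot.mkAlgHom K (QMatRel K q) (FreeAlgebra.ι K 0)

noncomputable def QMat.y (K : Type*) [Field K] (q : K) : QMat K q :=
  RingQuot.mkAlgHom K (QMatRel K q) (FreeAlgebra.ι K 1)

noncomputable def QMat.u (K : Type*) [Field K] (q : K) : QMat K q :=
  RingQuot.mkAlgHom K (QMatRel K q) (FreeAlgebra.ι K 2)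

noncomputable def QMat.v (K : Type*) [Field K] (q : K) : QMat K q :=
  RingQuot.mkAlgHom K (QMatRel K q) (FreeAlgebra.ι K 3)

section
variable {R A : Type*} [CommRing R] [Ring A] [Algebra R A]

lemma qpow_left (c : R) {a b : A} (h : a * b = c • (b * a)) :
    ∀ n : ℕ, a ^ n * b = c ^ n • (b * a ^ n)
  | 0 => by simp
  | (n+1) => by
    rw [pow_succ, mul_assoc, h, mul_smul_comm, ← mul_assoc, qpow_left c h n,
      smul_mul_assoc, smul_smul, mul_assoc, ← pow_succ, ← pow_succ']

lemma qpow_right (c : R) {a b : A} (h : a * b = c • (b * a)) :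
    ∀ n : ℕ, a * b ^ n = c ^ n • (b ^ n * a)
  | 0 => by simp
  | (n+1) => by
    rw [pow_succ', ← mul_assoc, h, smul_mul_assoc, mul_assoc, qpow_right c h n,
      mul_smul_comm, smul_smul, ← mul_assoc, ← pow_succ', ← pow_succ']
end

section
variable {K : Type*} [Field K] {q : K} (hq0 : q ≠ 0)
variable {A : Type*} [Ring A] [Algebra K A] {x y u v : A}
variable (hxu : x * u = q • (u * x)) (hyu : y * u = q⁻¹ • (u * y))
variable (hxv : x * v = q • (v * x)) (hvy : v * y = q • (y * v))
variable (hyx : y * x = x * y - (q - q⁻¹) • (u * v))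

include hxu hxv in
lemma hx_uv1 : x * (u * v) = (q * q) • ((u * v) * x) := by
  rw [← mul_assoc, hxu, smul_mul_assoc, mul_assoc, hxv, mul_smul_comm, smul_smul, ← mul_assoc]

include hq0 hyu hvy in
lemma hy_uv1 : y * (u * v) = (q⁻¹ * q⁻¹) • ((u * v) * y) := by
  have hyv : y * v = q⁻¹ • (v * y) := by
    rw [hvy, smul_smul, inv_mul_cancel₀ hq0, one_smul]
  rw [← mul_assoc, hyu, smul_mul_assoc, mul_assoc, hyv, mul_smul_comm, smul_smul, ← mul_assoc]

include hq0 hxu hxv hyx in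
lemma claimY : ∀ n : ℕ, y * x ^ (n+1) =
    x ^ (n+1) * y - ((q ^ (2*(n+1)) - 1) * q⁻¹) • ((u * v) * x ^ n) := by
  intro n
  induction n with
  | zero =>
    have hc : (q ^ (2*(0+1)) - 1) * q⁻¹ = q - q⁻¹ := by
      field_simp
    simpa [hc] using hyx
  | succ n ih =>
    have hc : (q - q⁻¹) * (q*q) ^ (n+1) + (q ^ (2*(n+1)) - 1) * q⁻¹
        = (q ^ (2*(n+2)) - 1) * q⁻¹ := by
      field_simp; ring
    calc y * x ^ (n+2) = (y * x ^ (n+1)) * x := by rw [pow_succ, ← mul_assoc]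
      _ = (x ^ (n+1) * (y * x)) - ((q ^ (2*(n+1)) - 1) * q⁻¹) • ((u * v) * x ^ (n+1)) := by
          rw [ih, sub_mul, smul_mul_assoc, mul_assoc, mul_assoc, ← pow_succ]
      _ = x ^ (n+2) * y - ((q - q⁻¹) * (q*q)^(n+1)) • ((u*v) * x^(n+1))
            - ((q ^ (2*(n+1)) - 1) * q⁻¹) • ((u * v) * x ^ (n+1)) := by
          rw [hyx, mul_sub, ← mul_assoc, ← pow_succ, mul_smul_comm,
            qpow_left (q*q) (hx_uv1 hxu hxv) (n+1), smul_smul]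
      _ = x ^ (n+2) * y - ((q ^ (2*(n+2)) - 1) * q⁻¹) • ((u * v) * x ^ (n+1)) := by
          rw [sub_sub, ← add_smul, hc]

include hq0 hyu hvy hyx in
lemma claimX : ∀ n : ℕ, y ^ (n+1) * x =
    x * y ^ (n+1) - (q - q * (q⁻¹) ^ (2*(n+1))) • ((u * v) * y ^ n) := by
  intro n
  induction n with
  | zero =>
    have hc : q - q * (q ^ 2)⁻¹ = q - q⁻¹ := by
      field_simp
    simpa [hc] using hyx
  | succ n ih =>
    have hc : (q - q⁻¹) + (q - q * (q⁻¹) ^ (2*(n+1))) * (q⁻¹ * q⁻¹)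
        = q - q * (q⁻¹) ^ (2*(n+2)) := by
      have hp : q * q⁻¹ = 1 := mul_inv_cancel₀ hq0
      generalize q⁻¹ = p at hp ⊢
      linear_combination p * hp
    calc y ^ (n+2) * x = y * (y ^ (n+1) * x) := by rw [pow_succ', mul_assoc]
      _ = (y * x) * y ^ (n+1) - (q - q * (q⁻¹) ^ (2*(n+1))) • ((y * (u * v)) * y ^ n) := by
          rw [ih, mul_sub, mul_smul_comm, ← mul_assoc, ← mul_assoc]
      _ = x * y ^ (n+2) - (q - q⁻¹) • ((u*v) * y ^ (n+1))
            - ((q - q * (q⁻¹) ^ (2*(n+1))) * (q⁻¹ * q⁻¹)) • ((u * v) * y ^ (n+1)) := by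
          rw [hyx, sub_mul, mul_assoc, ← pow_succ', smul_mul_assoc,
            hy_uv1 hq0 hyu hvy, smul_mul_assoc, smul_smul, mul_comm (q - q * (q⁻¹) ^ (2*(n+1))),
            mul_assoc (u*v), ← pow_succ', ← smul_smul, smul_smul]
      _ = x * y ^ (n+2) - (q - q * (q⁻¹) ^ (2*(n+2))) • ((u * v) * y ^ (n+1)) := by
          rw [sub_sub, ← add_smul, hc]
end

section
variable (K : Type*) [Field K] (q : K)

lemma rel_xu : QMat.x K q * QMat.u K q = q • (QMat.u K q * QMat.x K q) := by
  have := RingQuot.mkAlgHom_rel K (QMatRel.relxu (K := K) (q := q))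
  simpa [QMat.x, QMat.u, map_mul, Algebra.smul_def] using this

lemma rel_yu : QMat.y K q * QMat.u K q = q⁻¹ • (QMat.u K q * QMat.y K q) := by
  have := RingQuot.mkAlgHom_rel K (QMatRel.relyu (K := K) (q := q))
  simpa [QMat.y, QMat.u, map_mul, Algebra.smul_def] using this

lemma rel_vu : QMat.v K q * QMat.u K q = QMat.u K q * QMat.v K q := by
  have := RingQuot.mkAlgHom_rel K (QMatRel.relvu (K := K) (q := q))
  simpa [QMat.v, QMat.u, map_mul] using this

lemma rel_xv : QMat.x K q * QMat.v K q = q • (QMat.v K q * QMat.x K q) := by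
  have := RingQuot.mkAlgHom_rel K (QMatRel.relxv (K := K) (q := q))
  simpa [QMat.x, QMat.v, map_mul, Algebra.smul_def] using this

lemma rel_vy : QMat.v K q * QMat.y K q = q • (QMat.y K q * QMat.v K q) := by
  have := RingQuot.mkAlgHom_rel K (QMatRel.relvy (K := K) (q := q))
  simpa [QMat.v, QMat.y, map_mul, Algebra.smul_def] using this

lemma rel_yx : QMat.y K q * QMat.x K q =
    QMat.x K q * QMat.y K q - (q - q⁻¹) • (QMat.u K q * QMat.v K q) := by
  have := RingQuot.mkAlgHom_rel K (QMatRel.relyx (K := K) (q := q))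
  simpa [QMat.x, QMat.y, QMat.u, QMat.v, map_mul, map_sub, Algebra.smul_def] using this

lemma mem_center_of_comm (z : QMat K q)
    (hx : QMat.x K q * z = z * QMat.x K q)
    (hy : QMat.y K q * z = z * QMat.y K q)
    (hu : QMat.u K q * z = z * QMat.u K q)
    (hv : QMat.v K q * z = z * QMat.v K q) :
    z ∈ Subalgebra.center K (QMat K q) := by
  rw [Subalgebra.mem_center_iff]
  intro b
  obtain ⟨f, rfl⟩ := RingQuot.mkAlgHom_surjective K (QMatRel K q) b
  induction f using FreeAlgebra.induction with
  | grade0 r => simp [AlgHom.commutes, Algebra.commutes]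
  | grade1 i => fin_cases i
                · exact hx
                · exact hy
                · exact hu
                · exact hv
  | mul f g hf hg => rw [map_mul, mul_assoc, hg, ← mul_assoc, hf, mul_assoc]
  | add f g hf hg => rw [map_add, add_mul, mul_add, hf, hg]
end

theorem stmt16 (K : Type*) [Field K] [CharZero K] (q : K) (l : ℕ) (hl : 3 ≤ l)
    (hq : IsPrimitiveRoot q l) :
    QMat.x K q ^ l ∈ Subalgebra.center K (QMat K q) ∧
    QMat.y K q ^ l ∈ Subalgebra.center K (QMat K q) ∧
    ∀ i j : ℕ, i + j = l → QMat.u K q ^ i * QMat.v K q ^ j ∈ Subalgebra.center K (QMat K q) := by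
  have hl0 : l ≠ 0 := by omega
  have hq0 : q ≠ 0 := hq.ne_zero hl0
  have hql : q ^ l = 1 := hq.pow_eq_one
  have hqil : (q⁻¹) ^ l = 1 := by rw [inv_pow, hql, inv_one]
  have hxu := rel_xu K q
  have hyu := rel_yu K q
  have hvu := rel_vu K q
  have hxv := rel_xv K q
  have hvy := rel_vy K q
  have hyx := rel_yx K q
  obtain ⟨m, hm⟩ : ∃ m, l = m + 1 := ⟨l - 1, by omega⟩
  refine ⟨?_, ?_, ?_⟩
  · apply mem_center_of_comm
    · exact ((Commute.refl (QMat.x K q)).pow_right l)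
    · have h1 : q ^ (2 * (m + 1)) = 1 := by
        rw [mul_comm 2 (m + 1), pow_mul, ← hm, hql, one_pow]
      rw [hm, claimY hq0 hxu hxv hyx m, h1, sub_self, zero_mul, zero_smul, sub_zero]
    · rw [qpow_left q hxu l, hql, one_smul]
    · rw [qpow_left q hxv l, hql, one_smul]
  · apply mem_center_of_comm
    · have h2 : (q⁻¹) ^ (2 * (m + 1)) = 1 := by
        rw [mul_comm 2 (m + 1), pow_mul, ← hm, hqil, one_pow]
      rw [hm, claimX hq0 hyu hvy hyx m, h2, mul_one, sub_self, zero_smul, sub_zero]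
    · exact ((Commute.refl (QMat.y K q)).pow_right l)
    · rw [qpow_left q⁻¹ hyu l, hqil, one_smul]
    · rw [qpow_right q hvy l, hql, one_smul]
  · intro i j hij
    have hc : Commute (QMat.u K q) (QMat.v K q) := hvu.symm
    apply mem_center_of_comm
    · rw [← mul_assoc, qpow_right q hxu i, smul_mul_assoc, mul_assoc, qpow_right q hxv j,
        mul_smul_comm, smul_smul, ← pow_add, hij, hql, one_smul, ← mul_assoc]
    · have hui_y : QMat.u K q ^ i * QMat.y K q = q ^ i • (QMat.y K q * QMat.u K q ^ i) := by
        rw [qpow_right q⁻¹ hyu i, smul_smul, ← mul_pow, mul_inv_cancel₀ hq0, one_pow, one_smul]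
      symm
      rw [mul_assoc, qpow_left q hvy j, mul_smul_comm, ← mul_assoc, hui_y, smul_mul_assoc,
        smul_smul, ← pow_add, add_comm j i, hij, hql, one_smul, mul_assoc]
    · exact (((Commute.refl (QMat.u K q)).pow_right i).mul_right (hc.pow_right j))
    · exact ((hc.symm.pow_right i).mul_right ((Commute.refl (QMat.v K q)).pow_right j))
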